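/- The determinant of the n×n upper Hessenberg matrix U_n(s,t), whose subdiagonal entries equal s, whose entry (i,j) equals t when j ≥ i and j−i is even, and equals 0 when j > i and j−i is odd, satisfies the recurrence det(U_n) = t·det(U_{n−1}) + s²·det(U_{n−2}) for all n ≥ 3, with det(U_1) = t and det(U_2) = t². -/

import Mathlib

/-- The upper Hessenberg matrix `U_n(s,t)`: subdiagonal entries `s`,
entry `t` at `(i,j)` with `j ≥ i` and `j - i` even, `0` at `(i,j)` with
`j > i` and `j - i` odd, and `0` below the subdiagonal. -/
def hessU (s t : ℝ) (n : ℕ) : Matrix (Fin n) (Fin n) ℝ :=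
  fun i j =>
    if (i : ℕ) ≤ (j : ℕ) then (if ((j : ℕ) - (i : ℕ)) % 2 = 0 then t else 0)
    else if (i : ℕ) = (j : ℕ) + 1 then s else 0

namespace hessAux

/-- entry function on ℕ -/
def e (s t : ℝ) (a b : ℕ) : ℝ :=
  if a ≤ b then (if (b - a) % 2 = 0 then t else 0)
  else if a = b + 1 then s else 0

lemma hessU_eq_e (s t : ℝ) {n : ℕ} (i j : Fin n) : hessU s t n i j = e s t i j := rfl

lemma e_shift (s t : ℝ) (a b c : ℕ) : e s t (a + c) (b + c) = e s t a b := by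
  unfold e
  have h1 : a + c ≤ b + c ↔ a ≤ b := by omega
  have h2 : b + c - (a + c) = b - a := by omega
  have h3 : a + c = b + c + 1 ↔ a = b + 1 := by omega
  rw [h2]; simp only [h1, h3]

lemma e_row0 (s t : ℝ) (b : ℕ) : e s t 0 (b + 2) = e s t 0 b := by
  unfold e
  simp only [Nat.zero_le, if_true, Nat.sub_zero, Nat.add_mod_right]

lemma val_succAbove_one {k : ℕ} (i : Fin (k+1)) :
    (((1 : Fin (k+2)).succAbove i) : ℕ) = if (i:ℕ) = 0 then 0 else (i:ℕ) + 1 := by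
  rcases Nat.eq_zero_or_pos (i:ℕ) with h | h
  · have h1 : i.castSucc < (1 : Fin (k+2)) := by
      rw [Fin.lt_iff_val_lt_val, Fin.coe_castSucc, h]; simp [Fin.val_one]
    rw [if_pos h, Fin.succAbove_of_castSucc_lt _ _ h1, Fin.coe_castSucc, h]
  · have h1 : (1 : Fin (k+2)) ≤ i.castSucc := by
      rw [Fin.le_iff_val_le_val, Fin.coe_castSucc, Fin.val_one]; omega
    rw [if_neg (by omega), Fin.succAbove_of_le_castSucc _ _ h1]
    exact Fin.val_succ i

lemma sub_succ_succ (s t : ℝ) (m : ℕ) :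
    (hessU s t (m+1)).submatrix Fin.succ Fin.succ = hessU s t m := by
  ext i j
  rw [Matrix.submatrix_apply, hessU_eq_e, hessU_eq_e, Fin.val_succ, Fin.val_succ,
    e_shift]

lemma key (s t : ℝ) (m : ℕ) :
    (hessU s t (m+3)).det =
      t * (hessU s t (m+2)).det + s ^ 2 * (hessU s t (m+1)).det := by
  set A := hessU s t (m+3) with hA
  rw [Matrix.det_succ_column_zero (n := m+2) (A := A), Fin.sum_univ_succ, Fin.sum_univ_succ]
  have hA00 : A 0 0 = t := by simp [hA, hessU]
  have hA10 : A (Fin.succ 0) 0 = s := by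
    rw [hA, hessU_eq_e]; simp [e]
  have htail : ∀ i : Fin (m+1),
      A (Fin.succ (Fin.succ i)) 0 = 0 := by
    intro i
    rw [hA, hessU_eq_e]
    simp only [Fin.val_succ, Fin.val_zero]
    unfold e
    rw [if_neg (by omega), if_neg (by omega)]
  have hsum0 : (∑ i : Fin (m+1),
      (-1 : ℝ) ^ ((Fin.succ (Fin.succ i) : Fin (m+3)) : ℕ) * A (Fin.succ (Fin.succ i)) 0 *
        ((A.submatrix (Fin.succAbove (Fin.succ (Fin.succ i))) Fin.succ).det)) = 0 := by
    apply Finset.sum_eq_zero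
    intro i _
    rw [htail i, mul_zero, zero_mul]
  rw [hsum0, add_zero, hA00, hA10]
  -- minor at 0
  have hm0 : A.submatrix (Fin.succAbove 0) Fin.succ = hessU s t (m+2) := by
    rw [Fin.succAbove_zero, hA, sub_succ_succ]
  rw [hm0]
  -- minor at 1 : expand again
  set B := A.submatrix (Fin.succAbove (Fin.succ 0)) Fin.succ with hB
  have hBval : ∀ (i j : Fin (m+2)), B i j
      = e s t (if (i:ℕ) = 0 then 0 else (i:ℕ)+1) ((j:ℕ)+1) := by
    intro i j
    rw [hB, Matrix.submatrix_apply, hA, hessU_eq_e, Fin.val_succ]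
    congr 1
    exact val_succAbove_one (k := m+1) i
  rw [Matrix.det_succ_column_zero (n := m+1) (A := B), Fin.sum_univ_succ, Fin.sum_univ_succ]
  have hB00 : B 0 0 = 0 := by
    rw [hBval]; simp [e]
  have hB10 : B (Fin.succ 0) 0 = s := by
    rw [hBval]; simp [e]
  have hBtail : ∀ i : Fin m, B (Fin.succ (Fin.succ i)) 0 = 0 := by
    intro i
    rw [hBval]
    simp only [Fin.val_succ, Fin.val_zero]
    rw [if_neg (by omega)]
    unfold e
    rw [if_neg (by omega), if_neg (by omega)]
  have hBsum0 : (∑ i : Fin m,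
      (-1 : ℝ) ^ ((Fin.succ (Fin.succ i) : Fin (m+2)) : ℕ) * B (Fin.succ (Fin.succ i)) 0 *
        ((B.submatrix (Fin.succAbove (Fin.succ (Fin.succ i))) Fin.succ).det)) = 0 := by
    apply Finset.sum_eq_zero
    intro i _
    rw [hBtail i, mul_zero, zero_mul]
  have hC : B.submatrix (Fin.succAbove (Fin.succ 0)) Fin.succ = hessU s t (m+1) := by
    ext i j
    rw [Matrix.submatrix_apply, hBval, hessU_eq_e, Fin.val_succ]
    rw [show ((Fin.succ 0 : Fin (m+2)).succAbove i) = ((1 : Fin (m+2)).succAbove i) from rfl]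
    rcases Nat.eq_zero_or_pos (i:ℕ) with h | h
    · rw [val_succAbove_one, if_pos h, if_pos rfl, h,
        show (j:ℕ)+1+1 = (j:ℕ)+2 from rfl]
      exact e_row0 s t j
    · rw [val_succAbove_one, if_neg (show ¬ (i:ℕ) = 0 by omega),
        if_neg (show ¬ ((i:ℕ)+1 = 0) by omega),
        show (i:ℕ)+1+1 = (i:ℕ)+2 from rfl,
        show (j:ℕ)+1+1 = (j:ℕ)+2 from rfl, e_shift]
  rw [hBsum0, hB00, hB10, hC]
  simp [Fin.val_succ]
  ring
end hessAux


theorem det_hessU_recurrence (s t : ℝ) :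
    (hessU s t 1).det = t ∧ (hessU s t 2).det = t ^ 2 ∧
    ∀ n : ℕ, 3 ≤ n →
      (hessU s t n).det =
        t * (hessU s t (n - 1)).det + s ^ 2 * (hessU s t (n - 2)).det := by
  refine ⟨by simp [Matrix.det_fin_one, hessU], ?_, ?_⟩
  · rw [Matrix.det_fin_two]
    simp [hessU]
    ring
  · intro n hn
    obtain ⟨m, rfl⟩ : ∃ m, n = m + 3 := ⟨n - 3, by omega⟩
    rw [show m+3-1 = m+2 from rfl, show m+3-2 = m+1 from rfl]
    exact hessAux.key s t m
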